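/- Let v ∈ ℂ^n be the vector with all components equal to 1 and let h_μ = {M ∈ su(n) : M v = iθ v for some θ ∈ ℝ}, b = {purely imaginary traceless diagonal matrices}, and c = {M antihermitian : M_{jk} = u_j - u_k with u_j ∈ ℝ, Σ u_j = 0}. Then su(n) = h_μ ⊕ b ⊕ c as a direct sum of real vector spaces, and c is the orthogonal complement of h_μ ⊕ b in su(n) with respect to the Killing form (X,Y) ↦ Tr(XY). -/

import Mathlib

open Matrix

namespace SuNDecomp


variable {n : ℕ}

noncomputable def thv (M : Matrix (Fin n) (Fin n) ℂ) : ℝ :=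
  (∑ j, (∑ k, M j k).im) / n

noncomputable def uv (M : Matrix (Fin n) (Fin n) ℂ) (j : Fin n) : ℝ :=
  (∑ k, M j k).re / n

noncomputable def dv (M : Matrix (Fin n) (Fin n) ℂ) (j : Fin n) : ℝ :=
  (∑ k, M j k).im - thv M

noncomputable def Cm (M : Matrix (Fin n) (Fin n) ℂ) : Matrix (Fin n) (Fin n) ℂ :=
  Matrix.of fun j k => (uv M j : ℂ) - (uv M k : ℂ)

noncomputable def Bm (M : Matrix (Fin n) (Fin n) ℂ) : Matrix (Fin n) (Fin n) ℂ :=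
  Matrix.diagonal fun j => (dv M j : ℂ) * Complex.I

noncomputable def Hm (M : Matrix (Fin n) (Fin n) ℂ) : Matrix (Fin n) (Fin n) ℂ :=
  M - Bm M - Cm M

-- entrywise antihermitian
lemma skew_apply {M : Matrix (Fin n) (Fin n) ℂ} (h : Mᴴ = -M) (j k : Fin n) :
    (starRingEnd ℂ) (M k j) = - M j k := by
  have := congrFun (congrFun h j) k
  simpa [Matrix.conjTranspose_apply] using this

-- sum of real parts of row sums is zero
lemma resum_eq_zero {M : Matrix (Fin n) (Fin n) ℂ} (h : Mᴴ = -M) :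
    ∑ j, (∑ k, M j k).re = 0 := by
  have key : ∀ j k, (M j k).re = -(M k j).re := by
    intro j k
    have := congrArg Complex.re (skew_apply h k j)
    simp at this
    linarith
  have hS : ∑ j, ∑ k, (M j k).re = 0 := by
    have h2 : ∑ j, ∑ k, (M j k).re = - ∑ j, ∑ k, (M j k).re := by
      calc ∑ j, ∑ k, (M j k).re
          = ∑ j, ∑ k, -(M k j).re :=
            Finset.sum_congr rfl fun j _ => Finset.sum_congr rfl fun k _ => key j k
        _ = -∑ j, ∑ k, (M k j).re := by simp
        _ = -∑ j, ∑ k, (M j k).re := by rw [Finset.sum_comm]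
    linarith
  simpa [Complex.re_sum] using hS

lemma rowsum_Bm (M : Matrix (Fin n) (Fin n) ℂ) (j : Fin n) :
    ∑ k, Bm M j k = (dv M j : ℂ) * Complex.I := by
  simp [Bm, Matrix.diagonal_apply]

lemma rowsum_Cm (M : Matrix (Fin n) (Fin n) ℂ) (j : Fin n) :
    ∑ k, Cm M j k = (n : ℂ) * (uv M j : ℂ) - ∑ k, (uv M k : ℂ) := by
  simp [Cm, Finset.sum_sub_distrib, mul_comm]

lemma sum_uv (M : Matrix (Fin n) (Fin n) ℂ) (h : Mᴴ = -M) : ∑ j, uv M j = 0 := by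
  unfold uv
  rw [← Finset.sum_div, resum_eq_zero h, zero_div]

lemma sum_dv (M : Matrix (Fin n) (Fin n) ℂ) : ∑ j, dv M j = 0 := by
  unfold dv thv
  rcases Nat.eq_zero_or_pos n with hn | hn
  · subst hn; simp
  · rw [Finset.sum_sub_distrib]
    simp [Finset.sum_const, Finset.card_fin]
    field_simp
    ring


lemma Bm_skew (M : Matrix (Fin n) (Fin n) ℂ) : (Bm M)ᴴ = -(Bm M) := by
  ext j k
  simp [Bm, Matrix.conjTranspose_apply, Matrix.diagonal_apply]
  rcases eq_or_ne k j with h | h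
  · subst h; simp [mul_comm]
  · simp [h, Ne.symm h]

lemma Cm_skew (M : Matrix (Fin n) (Fin n) ℂ) : (Cm M)ᴴ = -(Cm M) := by
  ext j k
  simp [Cm, Matrix.conjTranspose_apply]

lemma Bm_trace (M : Matrix (Fin n) (Fin n) ℂ) : (Bm M).trace = 0 := by
  have : (Bm M).trace = (∑ j, (dv M j : ℂ)) * Complex.I := by
    simp [Bm, Matrix.trace, Matrix.diag, Finset.sum_mul]
  rw [this]
  have : (∑ j, (dv M j : ℂ)) = ((∑ j, dv M j : ℝ) : ℂ) := by push_cast; ring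
  rw [this, sum_dv M]
  simp

lemma Cm_trace (M : Matrix (Fin n) (Fin n) ℂ) : (Cm M).trace = 0 := by
  simp [Cm, Matrix.trace, Matrix.diag]

lemma Hm_skew {M : Matrix (Fin n) (Fin n) ℂ} (h : Mᴴ = -M) : (Hm M)ᴴ = -(Hm M) := by
  unfold Hm
  rw [Matrix.conjTranspose_sub, Matrix.conjTranspose_sub, h, Bm_skew, Cm_skew]
  ext j k
  simp
  ring

lemma Hm_trace {M : Matrix (Fin n) (Fin n) ℂ} (h : M.trace = 0) : (Hm M).trace = 0 := by
  unfold Hm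
  rw [Matrix.trace_sub, Matrix.trace_sub, h, Bm_trace, Cm_trace]
  ring

lemma rowsum_Hm {M : Matrix (Fin n) (Fin n) ℂ} (hM : Mᴴ = -M) (j : Fin n) :
    ∑ k, Hm M j k = (thv M : ℂ) * Complex.I := by
  have hn : (n : ℝ) ≠ 0 := by
    have : 0 < n := j.pos
    positivity
  have hsum : ∑ k, (uv M k : ℂ) = 0 := by
    have : (∑ k, (uv M k : ℂ)) = ((∑ k, uv M k : ℝ) : ℂ) := by push_cast; ring
    rw [this, sum_uv M hM]; simp
  have h1 : ∑ k, Hm M j k = (∑ k, M j k) - (dv M j : ℂ) * Complex.I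
      - ((n : ℂ) * (uv M j : ℂ) - ∑ k, (uv M k : ℂ)) := by
    unfold Hm
    simp [Matrix.sub_apply, Finset.sum_sub_distrib, rowsum_Bm, rowsum_Cm]
  rw [h1, hsum]
  have hre : (n : ℂ) * (uv M j : ℂ) = ((∑ k, M j k).re : ℂ) := by
    have hnC : (n : ℂ) ≠ 0 := by exact_mod_cast hn
    unfold uv
    push_cast
    rw [mul_comm, div_mul_cancel₀ _ hnC]
  have him : (dv M j : ℂ) = ((∑ k, M j k).im : ℂ) - (thv M : ℂ) := by
    unfold dv; push_cast; ring
  rw [hre, him]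
  have hz := Complex.re_add_im (∑ k, M j k)
  linear_combination -hz

lemma Hm_mulvec {M : Matrix (Fin n) (Fin n) ℂ} (hM : Mᴴ = -M) :
    Hm M *ᵥ (fun _ => (1:ℂ)) = ((thv M : ℂ) * Complex.I) • (fun _ => (1:ℂ)) := by
  funext j
  simp [Matrix.mulVec, dotProduct, rowsum_Hm hM j]

-- antihermitian with zero trace-square is zero
lemma skew_sq_trace_zero {X : Matrix (Fin n) (Fin n) ℂ} (hX : Xᴴ = -X)
    (h : (X * X).trace = 0) : X = 0 := by
  have h1 : (X * X).trace = -∑ j, ∑ k, ((Complex.normSq (X j k) : ℝ) : ℂ) := by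
    rw [Matrix.trace]
    simp only [Matrix.diag, Matrix.mul_apply]
    rw [← Finset.sum_neg_distrib]
    refine Finset.sum_congr rfl fun j _ => ?_
    rw [← Finset.sum_neg_distrib]
    refine Finset.sum_congr rfl fun k _ => ?_
    have hk : X k j = -(starRingEnd ℂ) (X j k) := by
      have := skew_apply hX k j
      rw [this, neg_neg]
    rw [hk, mul_neg, Complex.mul_conj]
  rw [h1] at h
  have h2 : ∑ j, ∑ k, Complex.normSq (X j k) = 0 := by
    have := neg_eq_zero.mp h
    have h3 : ((∑ j, ∑ k, Complex.normSq (X j k) : ℝ) : ℂ) = 0 := by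
      push_cast
      exact this
    exact_mod_cast h3
  ext j k
  have h4 : ∀ j ∈ Finset.univ, ∑ k, Complex.normSq (X j k) = 0 := by
    intro j _
    have hnn : ∀ i ∈ (Finset.univ : Finset (Fin n)), 0 ≤ ∑ k, Complex.normSq (X i k) :=
      fun i _ => Finset.sum_nonneg fun k _ => Complex.normSq_nonneg _
    exact (Finset.sum_eq_zero_iff_of_nonneg hnn).mp h2 j (Finset.mem_univ j)
  have h5 := (Finset.sum_eq_zero_iff_of_nonneg
      (fun i _ => Complex.normSq_nonneg (X j i))).mp (h4 j (Finset.mem_univ j)) k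
      (Finset.mem_univ k)
  simpa using Complex.normSq_eq_zero.mp h5


lemma trace_mul_eq (M A : Matrix (Fin n) (Fin n) ℂ) :
    (M * A).trace = ∑ j, ∑ k, M j k * A k j := by
  simp [Matrix.trace, Matrix.diag, Matrix.mul_apply]

lemma orth_c_b (M A : Matrix (Fin n) (Fin n) ℂ) (u : Fin n → ℝ)
    (hM : ∀ j k, M j k = (u j : ℂ) - u k) (d : Fin n → ℝ)
    (hA : A = Matrix.diagonal fun j => (d j : ℂ) * Complex.I) :
    (M * A).trace = 0 := by
  rw [trace_mul_eq]
  refine Finset.sum_eq_zero fun j _ => ?_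
  rw [Finset.sum_eq_single j]
  · rw [hM]; simp
  · intro k _ hkj
    rw [hA, Matrix.diagonal_apply_ne _ hkj, mul_zero]
  · simp

lemma orth_c_h (M A : Matrix (Fin n) (Fin n) ℂ) (u : Fin n → ℝ) (hu : ∑ j, u j = 0)
    (hM : ∀ j k, M j k = (u j : ℂ) - u k) (θ : ℝ) (hA : Aᴴ = -A)
    (hAv : A *ᵥ (fun _ => (1:ℂ)) = ((θ:ℂ) * Complex.I) • (fun _ => (1:ℂ))) :
    (M * A).trace = 0 := by
  have hucast : ∑ j, (u j : ℂ) = 0 := by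
    have : (∑ j, (u j : ℂ)) = ((∑ j, u j : ℝ) : ℂ) := by push_cast; ring
    rw [this, hu]; simp
  have row : ∀ k, ∑ j, A k j = (θ:ℂ) * Complex.I := by
    intro k
    have := congrFun hAv k
    simpa [Matrix.mulVec, dotProduct] using this
  have col : ∀ j, ∑ k, A k j = (θ:ℂ) * Complex.I := by
    intro j
    have e1 : ∀ k, A k j = -(starRingEnd ℂ) (A j k) := by
      intro k
      have h := skew_apply hA k j
      rw [h, neg_neg]
    calc ∑ k, A k j = ∑ k, -(starRingEnd ℂ) (A j k) :=
          Finset.sum_congr rfl fun k _ => e1 k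
      _ = -(starRingEnd ℂ) (∑ k, A j k) := by rw [map_sum]; simp
      _ = (θ:ℂ) * Complex.I := by
          rw [row j]
          simp [Complex.conj_I]
  rw [trace_mul_eq]
  have expand : ∑ j, ∑ k, M j k * A k j
      = (∑ j, (u j : ℂ) * ((θ:ℂ)*Complex.I)) - ∑ k, (u k : ℂ) * ((θ:ℂ)*Complex.I) := by
    calc ∑ j, ∑ k, M j k * A k j
        = ∑ j, ∑ k, ((u j:ℂ) * A k j - (u k:ℂ) * A k j) := by
          refine Finset.sum_congr rfl fun j _ => Finset.sum_congr rfl fun k _ => ?_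
          rw [hM]; ring
      _ = (∑ j, ∑ k, (u j:ℂ) * A k j) - ∑ j, ∑ k, (u k:ℂ) * A k j := by
          simp [Finset.sum_sub_distrib]
      _ = _ := by
          congr 1
          · refine Finset.sum_congr rfl fun j _ => ?_
            rw [← Finset.mul_sum, col j]
          · rw [Finset.sum_comm]
            refine Finset.sum_congr rfl fun k _ => ?_
            rw [← Finset.mul_sum, row k]
  rw [expand, sub_self]

lemma triple_zero {H B C : Matrix (Fin n) (Fin n) ℂ} {θ : ℝ} {d u : Fin n → ℝ}
    (hHv : H *ᵥ (fun _ => (1:ℂ)) = ((θ:ℂ) * Complex.I) • (fun _ => (1:ℂ)))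
    (hd : ∑ j, d j = 0) (hB : B = Matrix.diagonal fun j => (d j : ℂ) * Complex.I)
    (hu : ∑ j, u j = 0) (hC : ∀ j k, C j k = (u j : ℂ) - u k)
    (hsum : H + B + C = 0) : H = 0 ∧ B = 0 ∧ C = 0 := by
  have hucast : ∑ k, (u k : ℂ) = 0 := by
    have : (∑ k, (u k : ℂ)) = ((∑ k, u k : ℝ) : ℂ) := by push_cast; ring
    rw [this, hu]; simp
  have rowH : ∀ j, ∑ k, H j k = (θ:ℂ) * Complex.I := by
    intro j
    have := congrFun hHv j
    simpa [Matrix.mulVec, dotProduct] using this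
  have rowB : ∀ j, ∑ k, B j k = (d j : ℂ) * Complex.I := by
    intro j; rw [hB]; simp [Matrix.diagonal_apply]
  have rowC : ∀ j, ∑ k, C j k = (n : ℂ) * (u j : ℂ) := by
    intro j
    calc ∑ k, C j k = ∑ k, ((u j : ℂ) - u k) :=
          Finset.sum_congr rfl fun k _ => hC j k
      _ = (n : ℂ) * (u j : ℂ) - ∑ k, (u k : ℂ) := by
          simp [Finset.sum_sub_distrib, mul_comm]
      _ = (n : ℂ) * (u j : ℂ) := by rw [hucast, sub_zero]
  have key : ∀ j, (θ:ℂ) * Complex.I + (d j : ℂ) * Complex.I + (n : ℂ) * (u j : ℂ) = 0 := by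
    intro j
    have h0 : ∑ k, (H + B + C) j k = 0 := by rw [hsum]; simp
    have h1 : ∑ k, (H + B + C) j k = (∑ k, H j k) + (∑ k, B j k) + ∑ k, C j k := by
      simp [Matrix.add_apply, Finset.sum_add_distrib]
    rw [h1, rowH, rowB, rowC] at h0
    exact h0
  have hre : ∀ j : Fin n, u j = 0 := by
    intro j
    have hk := congrArg Complex.re (key j)
    simp at hk
    have hn : (n : ℝ) ≠ 0 := by
      have : 0 < n := j.pos
      positivity
    rcases hk with hk | hk
    · exact absurd hk (by exact_mod_cast hn)
    · exact hk
  have him : ∀ j : Fin n, θ + d j = 0 := by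
    intro j
    have hk := congrArg Complex.im (key j)
    simpa using hk
  have hd0 : ∀ j : Fin n, d j = 0 := by
    intro j
    have hn : 0 < n := j.pos
    have hsum2 : ∑ i : Fin n, (θ + d i) = 0 :=
      Finset.sum_eq_zero fun i _ => him i
    rw [Finset.sum_add_distrib, hd, add_zero, Finset.sum_const, Finset.card_fin,
      nsmul_eq_mul] at hsum2
    have hθ : θ = 0 := by
      have hn' : (n : ℝ) ≠ 0 := by positivity
      rcases mul_eq_zero.mp hsum2 with h | h
      · exact absurd h hn'
      · exact h
    have := him j
    linarith
  have hC0 : C = 0 := by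
    ext j k
    rw [hC, hre j, hre k]
    simp
  have hB0 : B = 0 := by
    rw [hB]
    ext j k
    rcases eq_or_ne j k with h | h
    · subst h; simp [Matrix.diagonal_apply, hd0 j]
    · simp [Matrix.diagonal_apply_ne _ h]
  refine ⟨?_, hB0, hC0⟩
  have : H = (H + B + C) - B - C := by abel
  rw [this, hsum, hB0, hC0]
  simp

end SuNDecomp

open SuNDecomp

/-- With `v` the all-ones vector, `su(n)` decomposes as the
direct sum `h_μ ⊕ b ⊕ c`, where `h_μ = {M ∈ su(n) : Mv = iθv}`,
`b` = purely imaginary traceless diagonal matrices, and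
`c` = antihermitian matrices with entries `u_j - u_k` (`u` real, `Σ u_j = 0`);
moreover `c` is the orthogonal complement of `h_μ ⊕ b` in `su(n)` with respect
to the Killing form `(X, Y) ↦ Tr(XY)`. -/
theorem su_n_decomposition
    {n : ℕ} (v : Fin n → ℂ) (hv : ∀ j, v j = 1) :
    -- membership predicates
    ∀ inSU inHμ inB inC : Matrix (Fin n) (Fin n) ℂ → Prop,
    (∀ M, inSU M ↔ (Mᴴ = -M ∧ M.trace = 0)) →
    (∀ M, inHμ M ↔ (inSU M ∧ ∃ θ : ℝ, M *ᵥ v = ((θ : ℂ) * Complex.I) • v)) →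
    (∀ M, inB M ↔ (∃ d : Fin n → ℝ, (∑ j, d j = 0) ∧
        M = Matrix.diagonal (fun j => (d j : ℂ) * Complex.I))) →
    (∀ M, inC M ↔ (∃ u : Fin n → ℝ, (∑ j, u j = 0) ∧
        ∀ j k, M j k = (u j : ℂ) - (u k : ℂ))) →
    -- direct sum decomposition: existence and uniqueness
    ((∀ M, inSU M →
        ∃! t : Matrix (Fin n) (Fin n) ℂ × Matrix (Fin n) (Fin n) ℂ ×
            Matrix (Fin n) (Fin n) ℂ,
          inHμ t.1 ∧ inB t.2.1 ∧ inC t.2.2 ∧ M = t.1 + t.2.1 + t.2.2) ∧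
    -- `c` is the orthogonal complement of `h_μ ⊕ b` in `su(n)`
      (∀ M, inSU M →
        ((∀ A, inHμ A ∨ inB A → (M * A).trace = 0) ↔ inC M))) := by
  intro inSU inHμ inB inC hSUdef hHμdef hBdef hCdef
  have hv' : v = fun _ => (1:ℂ) := funext hv
  subst hv'
  constructor
  · -- existence and uniqueness
    intro M hM
    obtain ⟨hMskew, hMtr⟩ := (hSUdef M).mp hM
    have hMeq2 : M = Hm M + Bm M + Cm M := by unfold SuNDecomp.Hm; abel
    refine ⟨(Hm M, Bm M, Cm M), ⟨?_, ?_, ?_, hMeq2⟩, ?_⟩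
    · rw [hHμdef]
      exact ⟨(hSUdef _).mpr ⟨Hm_skew hMskew, Hm_trace hMtr⟩, thv M, Hm_mulvec hMskew⟩
    · rw [hBdef]
      exact ⟨dv M, sum_dv M, rfl⟩
    · rw [hCdef]
      exact ⟨uv M, sum_uv M hMskew, fun j k => rfl⟩
    · rintro ⟨H, B, C⟩ ⟨hH, hB, hC, hMeq⟩
      rw [hHμdef] at hH
      obtain ⟨hHsu, θ1, hHv⟩ := hH
      obtain ⟨hHskew, hHtr⟩ := (hSUdef H).mp hHsu
      obtain ⟨d1, hd1, hB1⟩ := (hBdef B).mp hB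
      obtain ⟨u1, hu1, hC1⟩ := (hCdef C).mp hC
      have h3 : H + B + C = Hm M + Bm M + Cm M := by rw [← hMeq, ← hMeq2]
      have hdiff : (H - Hm M) + (B - Bm M) + (C - Cm M) = 0 := by
        calc (H - Hm M) + (B - Bm M) + (C - Cm M)
            = (H + B + C) - (Hm M + Bm M + Cm M) := by abel
          _ = 0 := by rw [h3, sub_self]
      have hHv' : (H - Hm M) *ᵥ (fun _ => (1:ℂ))
          = (((θ1 - thv M : ℝ) : ℂ) * Complex.I) • (fun _ => (1:ℂ)) := by
        rw [Matrix.sub_mulVec, hHv, Hm_mulvec hMskew]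
        funext j
        simp
        push_cast
        ring
      have hd' : ∑ j, (d1 j - dv M j) = 0 := by
        rw [Finset.sum_sub_distrib, hd1, sum_dv M, sub_zero]
      have hB' : B - Bm M = Matrix.diagonal fun j => ((d1 j - dv M j : ℝ) : ℂ) * Complex.I := by
        rw [hB1]
        ext j k
        rcases eq_or_ne j k with h | h
        · subst h
          simp [Bm, Matrix.diagonal_apply]
          push_cast
          ring
        · simp [Bm, Matrix.diagonal_apply_ne _ h]
      have hu' : ∑ j, (u1 j - uv M j) = 0 := by
        rw [Finset.sum_sub_distrib, hu1, sum_uv M hMskew, sub_zero]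
      have hC' : ∀ j k, (C - Cm M) j k = ((u1 j - uv M j : ℝ) : ℂ) - ((u1 k - uv M k : ℝ) : ℂ) := by
        intro j k
        rw [Matrix.sub_apply, hC1]
        show _ - ((uv M j : ℂ) - (uv M k : ℂ)) = _
        push_cast
        ring
      obtain ⟨e1, e2, e3⟩ := triple_zero hHv' hd' hB' hu' hC' hdiff
      have g1 : H = Hm M := sub_eq_zero.mp e1
      have g2 : B = Bm M := sub_eq_zero.mp e2
      have g3 : C = Cm M := sub_eq_zero.mp e3
      simp [Prod.ext_iff, g1, g2, g3]
  · intro M hM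
    obtain ⟨hMskew, hMtr⟩ := (hSUdef M).mp hM
    constructor
    · intro h
      set X := Hm M + Bm M with hX
      have hXskew : Xᴴ = -X := by
        rw [hX, Matrix.conjTranspose_add, Hm_skew hMskew, Bm_skew, neg_add]
      have hMC : M = X + Cm M := by rw [hX]; unfold SuNDecomp.Hm; abel
      have hHμm : inHμ (Hm M) := (hHμdef _).mpr
        ⟨(hSUdef _).mpr ⟨Hm_skew hMskew, Hm_trace hMtr⟩, thv M, Hm_mulvec hMskew⟩
      have hBmem : inB (Bm M) := (hBdef _).mpr ⟨dv M, sum_dv M, rfl⟩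
      have t1 : (M * Hm M).trace = 0 := h _ (Or.inl hHμm)
      have t2 : (M * Bm M).trace = 0 := h _ (Or.inr hBmem)
      have t3 : (Cm M * Hm M).trace = 0 :=
        orth_c_h _ _ (uv M) (sum_uv M hMskew) (fun j k => rfl) (thv M)
          (Hm_skew hMskew) (Hm_mulvec hMskew)
      have t4 : (Cm M * Bm M).trace = 0 :=
        orth_c_b _ _ (uv M) (fun j k => rfl) (dv M) rfl
      have hXC : X = M - Cm M := eq_sub_of_add_eq hMC.symm
      have tXX : (X * X).trace = 0 := by
        calc (X * X).trace = ((M - Cm M) * X).trace := by rw [← hXC]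
          _ = (M * X).trace - (Cm M * X).trace := by
              rw [Matrix.sub_mul, Matrix.trace_sub]
          _ = ((M * Hm M).trace + (M * Bm M).trace)
              - ((Cm M * Hm M).trace + (Cm M * Bm M).trace) := by
              rw [hX, Matrix.mul_add, Matrix.mul_add, Matrix.trace_add, Matrix.trace_add]
          _ = 0 := by rw [t1, t2, t3, t4]; ring
      have hX0 : X = 0 := skew_sq_trace_zero hXskew tXX
      have hMCm : M = Cm M := by
        have h5 := hMC
        rw [hX0, zero_add] at h5
        exact h5
      rw [hCdef]
      refine ⟨uv M, sum_uv M hMskew, fun j k => ?_⟩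
      conv_lhs => rw [hMCm]
      rfl
    · intro hC A hA
      obtain ⟨u, hu, hMu⟩ := (hCdef M).mp hC
      rcases hA with hA | hA
      · rw [hHμdef] at hA
        obtain ⟨hAsu, θ, hAv⟩ := hA
        obtain ⟨hAskew, _⟩ := (hSUdef A).mp hAsu
        exact orth_c_h M A u hu hMu θ hAskew hAv
      · obtain ⟨d, _, hAd⟩ := (hBdef A).mp hA
        exact orth_c_b M A u hMu d hAd
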